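/- arXiv:2007.08355 — 3 statements merged into one kernel-verified Lean document; each statement's English description precedes it below -/
import Mathlib

section
/- Discrete Poincaré–Wirtinger inequality: for any sequence (f_k)_{k=0}^{K} of real numbers and any index l with 0 ≤ l ≤ K, one has |f_l - (1/L) Σ''_{k=0}^{K} f_k Δx|^2 ≤ L Σ_{k=0}^{K-1} |δ_k^+ f_k|^2 Δx, where L = K Δx. -/
open Finset

lemma telescope_abs_le (K : ℕ) (f : ℕ → ℝ) {a b : ℕ} (ha : a ≤ K) (hb : b ≤ K) :
    |f b - f a| ≤ ∑ j ∈ range K, |f (j + 1) - f j| := by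
  wlog hab : a ≤ b generalizing a b
  · rw [abs_sub_comm]; exact this hb ha (le_of_not_ge hab)
  have htel : f b - f a = ∑ j ∈ Finset.Ico a b, (f (j + 1) - f j) := by
    have h1 : ∑ j ∈ range b, (f (j + 1) - f j) = f b - f 0 := Finset.sum_range_sub f b
    have h2 : ∑ j ∈ range a, (f (j + 1) - f j) = f a - f 0 := Finset.sum_range_sub f a
    rw [Finset.sum_Ico_eq_sub _ hab, h1, h2]; ring
  rw [htel]
  calc |∑ j ∈ Finset.Ico a b, (f (j + 1) - f j)|
      ≤ ∑ j ∈ Finset.Ico a b, |f (j + 1) - f j| := Finset.abs_sum_le_sum_abs _ _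
    _ ≤ ∑ j ∈ range K, |f (j + 1) - f j| := by
        apply Finset.sum_le_sum_of_subset_of_nonneg
        · intro x hx
          simp only [Finset.mem_Ico, Finset.mem_range] at *
          omega
        · intros; positivity

/-- Discrete Poincaré–Wirtinger inequality. -/
theorem discrete_poincare_wirtinger (K : ℕ) (hK : 1 ≤ K) (Δx : ℝ) (hΔx : 0 < Δx)
    (L : ℝ) (hL : L = K * Δx) (f : ℕ → ℝ) (l : ℕ) (hl : l ≤ K) :
    |f l - (1/L) * (((1/2) * f 0 + (∑ k ∈ Finset.Ioo 0 K, f k) + (1/2) * f K) * Δx)| ^ 2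
      ≤ L * ∑ k ∈ Finset.range K, |(f (k + 1) - f k) / Δx| ^ 2 * Δx := by
  set S : ℝ := ∑ j ∈ range K, |f (j + 1) - f j| with hS
  have hSnn : 0 ≤ S := Finset.sum_nonneg fun _ _ => abs_nonneg _
  have hL0 : 0 < L := by rw [hL]; positivity
  have hcard : (Finset.Ioo 0 K).card = K - 1 := by simp
  -- rewrite lhs inner expression
  have key : f l - (1/L) * (((1/2) * f 0 + (∑ k ∈ Finset.Ioo 0 K, f k) + (1/2) * f K) * Δx)
      = (Δx/L) * ((1/2) * (f l - f 0) + (∑ k ∈ Finset.Ioo 0 K, (f l - f k)) + (1/2) * (f l - f K)) := by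
    rw [Finset.sum_sub_distrib, Finset.sum_const, hcard]
    have hK1 : ((K : ℝ) - 1) = ((K - 1 : ℕ) : ℝ) := by
      push_cast [Nat.cast_sub hK]; ring
    field_simp
    rw [hL]
    rw [nsmul_eq_mul, ← hK1]; ring
  have hbound : |f l - (1/L) * (((1/2) * f 0 + (∑ k ∈ Finset.Ioo 0 K, f k) + (1/2) * f K) * Δx)| ≤ S := by
    rw [key, abs_mul]
    have h1 : |(Δx/L)| = Δx/L := abs_of_pos (by positivity)
    rw [h1]
    have h2 : |(1/2) * (f l - f 0) + (∑ k ∈ Finset.Ioo 0 K, (f l - f k)) + (1/2) * (f l - f K)|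
        ≤ (1/2) * S + (∑ k ∈ Finset.Ioo 0 K, S) + (1/2) * S := by
      refine (abs_add_le _ _).trans (add_le_add ((abs_add_le _ _).trans (add_le_add ?_ ?_)) ?_)
      · rw [abs_mul, abs_of_pos (by norm_num : (0:ℝ) < 1/2)]
        exact mul_le_mul_of_nonneg_left (telescope_abs_le K f (Nat.zero_le K) hl) (by norm_num)
      · exact (Finset.abs_sum_le_sum_abs _ _).trans (Finset.sum_le_sum fun k hk => by
          exact telescope_abs_le K f (le_of_lt (Finset.mem_Ioo.mp hk).2) hl)
      · rw [abs_mul, abs_of_pos (by norm_num : (0:ℝ) < 1/2)]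
        exact mul_le_mul_of_nonneg_left (telescope_abs_le K f le_rfl hl) (by norm_num)
    calc Δx/L * |(1/2) * (f l - f 0) + (∑ k ∈ Finset.Ioo 0 K, (f l - f k)) + (1/2) * (f l - f K)|
        ≤ Δx/L * ((1/2) * S + (∑ k ∈ Finset.Ioo 0 K, S) + (1/2) * S) :=
          mul_le_mul_of_nonneg_left h2 (by positivity)
      _ = S := by
          rw [Finset.sum_const, hcard]
          have : ((K - 1 : ℕ) : ℝ) = (K : ℝ) - 1 := by push_cast [Nat.cast_sub hK]; ring
          rw [nsmul_eq_mul, this, hL]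
          have hKpos : (0:ℝ) < K := by exact_mod_cast hK
          field_simp
          ring
  -- RHS equals K * ∑ (f(k+1)-f k)^2
  have hrhs : L * ∑ k ∈ Finset.range K, |(f (k + 1) - f k) / Δx| ^ 2 * Δx
      = (K : ℝ) * ∑ k ∈ Finset.range K, |f (k + 1) - f k| ^ 2 := by
    rw [Finset.mul_sum, Finset.mul_sum]
    refine Finset.sum_congr rfl fun k _ => ?_
    rw [abs_div, abs_of_pos hΔx, div_pow, hL]
    field_simp
  rw [hrhs]
  calc |f l - (1/L) * (((1/2) * f 0 + (∑ k ∈ Finset.Ioo 0 K, f k) + (1/2) * f K) * Δx)| ^ 2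
      ≤ S ^ 2 := by
        apply pow_le_pow_left₀ (abs_nonneg _) hbound
    _ ≤ (K : ℝ) * ∑ k ∈ Finset.range K, |f (k + 1) - f k| ^ 2 := by
        have := sq_sum_le_card_mul_sum_sq (s := range K) (f := fun j => |f (j + 1) - f j|)
        simpa using this
end

section
/- For F ∈ C^2(ℝ) and any ξ, ξ̃, η, η̃ ∈ ℝ, the identity dF/d(ξ,η) - dF/d(ξ̃,η̃) = (1/2)·F̄''(ξ, ξ̃; η, η̃)·(ξ - ξ̃) + (1/2)·F̄''(η, η̃; ξ, ξ̃)·(η - η̃) holds. -/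
/-- The difference quotient dF/d(ξ,η). -/
noncomputable def dq (F : ℝ → ℝ) (ξ η : ℝ) : ℝ :=
  if ξ = η then deriv F η else (F ξ - F η) / (ξ - η)

/-- The second-order difference quotient F̄''(ξ, ξ̃; η, η̃). -/
noncomputable def Fbar (F : ℝ → ℝ) (ξ ξ' η η' : ℝ) : ℝ :=
  if ξ = ξ' then deriv (fun x => dq F x η + dq F x η') ξ'
  else (1 / (ξ - ξ')) * ((dq F ξ η + dq F ξ η') - (dq F ξ' η + dq F ξ' η'))

lemma dq_symm (F : ℝ → ℝ) (a b : ℝ) : dq F a b = dq F b a := by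
  unfold dq
  by_cases h : a = b
  · subst h; simp
  · rw [if_neg h, if_neg (Ne.symm h)]
    rw [div_eq_div_iff (sub_ne_zero.mpr h) (sub_ne_zero.mpr (Ne.symm h))]
    ring

lemma Fbar_mul (F : ℝ → ℝ) (ξ ξ' η η' : ℝ) :
    Fbar F ξ ξ' η η' * (ξ - ξ') =
      (dq F ξ η + dq F ξ η') - (dq F ξ' η + dq F ξ' η') := by
  unfold Fbar
  by_cases h : ξ = ξ'
  · subst h; simp
  · rw [if_neg h]
    field_simp

/-- Decomposition of a difference of difference quotients via F̄''. -/
theorem dq_sub_dq (F : ℝ → ℝ) (hF : ContDiff ℝ 2 F) (ξ ξ' η η' : ℝ) :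
    dq F ξ η - dq F ξ' η' =
      (1/2) * Fbar F ξ ξ' η η' * (ξ - ξ') + (1/2) * Fbar F η η' ξ ξ' * (η - η') := by
  have h1 := Fbar_mul F ξ ξ' η η'
  have h2 := Fbar_mul F η η' ξ ξ'
  have e1 : dq F η ξ = dq F ξ η := dq_symm F η ξ
  have e2 : dq F η ξ' = dq F ξ' η := dq_symm F η ξ'
  have e3 : dq F η' ξ = dq F ξ η' := dq_symm F η' ξ
  have e4 : dq F η' ξ' = dq F ξ' η' := dq_symm F η' ξ'
  rw [e1, e2, e3, e4] at h2
  linarith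
end

section
/- Discrete energy dissipation: any solution (U^{(n)}, P^{(n)}) of the structure-preserving finite difference scheme for the Cahn–Hilliard equation with dynamic boundary condition satisfies (J_d(U^{(n+1)}) - J_d(U^{(n)}))/Δt = -γ|δ_n^+ U_0^{(n)}|^2 - γ|δ_n^+ U_K^{(n)}|^2 - Σ_{k=0}^{K-1}|δ_k^+ P_k^{(n)}|^2 Δx ≤ 0 for all n. -/
/-- The discrete energy J_d. -/
noncomputable def Jd (K : ℕ) (Δx γ : ℝ) (F : ℝ → ℝ) (U : ℤ → ℝ) : ℝ :=
  (∑ k ∈ Finset.range K, (γ / 2) * (((U ((k : ℤ) + 1) - U k) / Δx) ^ 2) * Δx) +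
    ((1/2) * F (U 0) + (∑ k ∈ Finset.Ioo 0 K, F (U (k : ℤ))) + (1/2) * F (U (K : ℤ))) * Δx

lemma Ioo_succ' (K : ℕ) (hK : 1 ≤ K) :
    Finset.Ioo 0 (K+1) = insert K (Finset.Ioo 0 K) := by
  ext m; simp only [Finset.mem_Ioo, Finset.mem_insert]; omega

lemma sbp (Δx : ℝ) (hΔx : Δx ≠ 0) (f g : ℤ → ℝ) (K : ℕ) (hK : 1 ≤ K) :
    ∑ k ∈ Finset.range K, ((f ((k:ℤ)+1) - f k)/Δx) * ((g ((k:ℤ)+1) - g k)/Δx) * Δx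
    = f (K:ℤ) * ((g ((K:ℤ)+1) - g ((K:ℤ)-1))/(2*Δx))
      - f 0 * ((g 1 - g (-1))/(2*Δx))
      - ((1/2) * (f 0 * ((g 1 - 2*g 0 + g (-1))/Δx^2))
         + (∑ k ∈ Finset.Ioo 0 K, f (k:ℤ) * ((g ((k:ℤ)+1) - 2*g (k:ℤ) + g ((k:ℤ)-1))/Δx^2))
         + (1/2) * (f (K:ℤ) * ((g ((K:ℤ)+1) - 2*g (K:ℤ) + g ((K:ℤ)-1))/Δx^2))) * Δx := by
  induction K, hK using Nat.le_induction with
  | base =>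
      have h0 : Finset.Ioo 0 1 = (∅ : Finset ℕ) := rfl
      rw [h0]
      norm_num [Finset.sum_range_one]
      field_simp
      ring
  | succ K hK ih =>
      rw [Finset.sum_range_succ, ih, Ioo_succ' K hK, Finset.sum_insert (by simp)]
      push_cast
      simp only [mul_div_assoc', ← Finset.sum_div]
      field_simp
      ring

lemma dq_mul (F : ℝ → ℝ) (x y : ℝ) : F x - F y = dq F x y * (x - y) := by
  unfold dq
  rcases eq_or_ne x y with h | h
  · simp [h]
  · rw [if_neg h, div_mul_cancel₀ _ (sub_ne_zero_of_ne h)]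

/-- Discrete energy dissipation of the structure-preserving scheme for the
Cahn–Hilliard equation with dynamic boundary condition. -/
theorem discrete_energy_dissipation (K : ℕ) (hK : 1 ≤ K) (Δx Δt γ : ℝ)
    (hΔx : 0 < Δx) (hΔt : 0 < Δt) (hγ : 0 < γ) (F : ℝ → ℝ) (hF : ContDiff ℝ 1 F)
    (U P : ℕ → ℤ → ℝ)
    (scheme1 : ∀ n : ℕ, ∀ k : ℤ, 0 ≤ k → k ≤ K →
      (U (n + 1) k - U n k) / Δt = (P n (k + 1) - 2 * P n k + P n (k - 1)) / Δx ^ 2)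
    (scheme2 : ∀ n : ℕ, ∀ k : ℤ, 0 ≤ k → k ≤ K →
      P n k = -γ * (((U (n + 1) (k + 1) + U n (k + 1)) / 2 -
          2 * ((U (n + 1) k + U n k) / 2) + (U (n + 1) (k - 1) + U n (k - 1)) / 2) / Δx ^ 2)
        + dq F (U (n + 1) k) (U n k))
    (dbc0 : ∀ n : ℕ, (U (n + 1) 0 - U n 0) / Δt =
      ((U (n + 1) 1 + U n 1) / 2 - (U (n + 1) (-1) + U n (-1)) / 2) / (2 * Δx))
    (dbcK : ∀ n : ℕ, (U (n + 1) (K : ℤ) - U n (K : ℤ)) / Δt =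
      -(((U (n + 1) ((K : ℤ) + 1) + U n ((K : ℤ) + 1)) / 2 -
          (U (n + 1) ((K : ℤ) - 1) + U n ((K : ℤ) - 1)) / 2) / (2 * Δx)))
    (nbc : ∀ n : ℕ, ∀ k : ℤ, k = 0 ∨ k = (K : ℤ) →
      (P n (k + 1) - P n (k - 1)) / (2 * Δx) = 0) :
    ∀ n : ℕ,
      (Jd K Δx γ F (U (n + 1)) - Jd K Δx γ F (U n)) / Δt =
          -γ * |(U (n + 1) 0 - U n 0) / Δt| ^ 2
            - γ * |(U (n + 1) (K : ℤ) - U n (K : ℤ)) / Δt| ^ 2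
            - ∑ k ∈ Finset.range K, |(P n ((k : ℤ) + 1) - P n k) / Δx| ^ 2 * Δx ∧
        (Jd K Δx γ F (U (n + 1)) - Jd K Δx γ F (U n)) / Δt ≤ 0 := by
  intro n
  obtain ⟨d, hd⟩ : ∃ d : ℤ → ℝ, ∀ k, d k = (U (n + 1) k - U n k) / Δt := ⟨_, fun _ => rfl⟩
  obtain ⟨w, hw⟩ : ∃ w : ℤ → ℝ, ∀ k, w k = (U (n + 1) k + U n k) / 2 := ⟨_, fun _ => rfl⟩
  obtain ⟨Q, hQ⟩ : ∃ Q : ℤ → ℝ, ∀ k, Q k = P n k := ⟨_, fun _ => rfl⟩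
  have hKz : (0:ℤ) ≤ (K:ℤ) := Int.natCast_nonneg K
  -- boundary conditions in terms of d, w, Q
  have hb0 : d 0 = (w 1 - w (-1)) / (2*Δx) := by
    simp only [hd, hw]; exact dbc0 n
  have hbK : d (K:ℤ) = -((w ((K:ℤ)+1) - w ((K:ℤ)-1)) / (2*Δx)) := by
    simp only [hd, hw]; exact dbcK n
  have hs1 : ∀ k : ℤ, 0 ≤ k → k ≤ (K:ℤ) → d k = (Q (k+1) - 2*Q k + Q (k-1)) / Δx^2 := by
    intro k h1 h2; simp only [hd, hQ]; exact scheme1 n k h1 h2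
  have hs2 : ∀ k : ℤ, 0 ≤ k → k ≤ (K:ℤ) →
      Q k = -γ * ((w (k+1) - 2*(w k) + w (k-1)) / Δx^2) + dq F (U (n+1) k) (U n k) := by
    intro k h1 h2; simp only [hd, hw, hQ]; exact scheme2 n k h1 h2
  have hn0 : (Q 1 - Q (-1)) / (2*Δx) = 0 := by
    have h := nbc n 0 (Or.inl rfl)
    rw [show (0:ℤ)+1 = 1 by decide, show (0:ℤ)-1 = -1 by decide] at h
    simp only [hQ]; exact h
  have hnK : (Q ((K:ℤ)+1) - Q ((K:ℤ)-1)) / (2*Δx) = 0 := by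
    simp only [hQ]; exact nbc n (K:ℤ) (Or.inr rfl)
  have hp0 : d 0 = (Q 1 - 2*Q 0 + Q (-1)) / Δx^2 := by
    have h := hs1 0 le_rfl hKz
    rwa [show (0:ℤ)+1 = 1 by decide, show (0:ℤ)-1 = -1 by decide] at h
  have hpK : d (K:ℤ) = (Q ((K:ℤ)+1) - 2*Q (K:ℤ) + Q ((K:ℤ)-1)) / Δx^2 := hs1 (K:ℤ) hKz le_rfl
  have hq0 : Q 0 = -γ * ((w 1 - 2*(w 0) + w (-1)) / Δx^2) + dq F (U (n+1) 0) (U n 0) := by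
    have h := hs2 0 le_rfl hKz
    rwa [show (0:ℤ)+1 = 1 by decide, show (0:ℤ)-1 = -1 by decide] at h
  have hqK : Q (K:ℤ) = -γ * ((w ((K:ℤ)+1) - 2*(w (K:ℤ)) + w ((K:ℤ)-1)) / Δx^2)
      + dq F (U (n+1) (K:ℤ)) (U n (K:ℤ)) := hs2 (K:ℤ) hKz le_rfl
  -- pointwise F difference
  have e2 : ∀ k : ℤ, F (U (n+1) k) - F (U n k) = Δt * (d k * dq F (U (n+1) k) (U n k)) := by
    intro k
    rw [hd, dq_mul F (U (n+1) k) (U n k)]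
    field_simp
  -- step 1: energy difference
  have hA : Jd K Δx γ F (U (n + 1)) - Jd K Δx γ F (U n)
      = γ*Δt*(∑ k ∈ Finset.range K, ((d ((k:ℤ)+1) - d k)/Δx) * ((w ((k:ℤ)+1) - w k)/Δx) * Δx)
        + Δt*((1/2)*(d 0 * dq F (U (n+1) 0) (U n 0))
              + (∑ k ∈ Finset.Ioo 0 K, d (k:ℤ) * dq F (U (n+1) (k:ℤ)) (U n (k:ℤ)))
              + (1/2)*(d (K:ℤ) * dq F (U (n+1) (K:ℤ)) (U n (K:ℤ))))*Δx := by
    have eS : (∑ k ∈ Finset.range K, (γ / 2) * (((U (n+1) ((k:ℤ)+1) - U (n+1) k) / Δx) ^ 2) * Δx)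
        - (∑ k ∈ Finset.range K, (γ / 2) * (((U n ((k:ℤ)+1) - U n k) / Δx) ^ 2) * Δx)
        = γ*Δt*(∑ k ∈ Finset.range K, ((d ((k:ℤ)+1) - d k)/Δx) * ((w ((k:ℤ)+1) - w k)/Δx) * Δx) := by
      rw [← Finset.sum_sub_distrib, Finset.mul_sum]
      refine Finset.sum_congr rfl fun m _ => ?_
      simp only [hd, hw]
      field_simp
      ring
    have eI : (∑ k ∈ Finset.Ioo 0 K, F (U (n+1) (k:ℤ))) - (∑ k ∈ Finset.Ioo 0 K, F (U n (k:ℤ)))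
        = Δt * ∑ k ∈ Finset.Ioo 0 K, d (k:ℤ) * dq F (U (n+1) (k:ℤ)) (U n (k:ℤ)) := by
      rw [← Finset.sum_sub_distrib, Finset.mul_sum]
      exact Finset.sum_congr rfl fun k _ => e2 (k:ℤ)
    simp only [Jd]
    linear_combination eS + Δx*eI + (Δx/2)*(e2 0) + (Δx/2)*(e2 (K:ℤ))
  -- step 2: summation by parts
  have hB := sbp Δx hΔx.ne' d w K hK
  have hC := sbp Δx hΔx.ne' Q Q K hK
  -- Ioo sum combinations
  have hIdQ : (∑ k ∈ Finset.Ioo 0 K, d (k:ℤ) * dq F (U (n+1) (k:ℤ)) (U n (k:ℤ)))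
      - γ * (∑ k ∈ Finset.Ioo 0 K, d (k:ℤ) * ((w ((k:ℤ)+1) - 2*w (k:ℤ) + w ((k:ℤ)-1))/Δx^2))
      = ∑ k ∈ Finset.Ioo 0 K, d (k:ℤ) * Q (k:ℤ) := by
    rw [Finset.mul_sum, ← Finset.sum_sub_distrib]
    refine Finset.sum_congr rfl fun k hk => ?_
    rw [Finset.mem_Ioo] at hk
    have h2 := hs2 (k:ℤ) (Int.natCast_nonneg k) (by exact_mod_cast hk.2.le)
    linear_combination (-(d (k:ℤ))) * h2
  have hIQ2 : (∑ k ∈ Finset.Ioo 0 K, d (k:ℤ) * Q (k:ℤ))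
      = ∑ k ∈ Finset.Ioo 0 K, Q (k:ℤ) * ((Q ((k:ℤ)+1) - 2*Q (k:ℤ) + Q ((k:ℤ)-1))/Δx^2) := by
    refine Finset.sum_congr rfl fun k hk => ?_
    rw [Finset.mem_Ioo] at hk
    rw [hs1 (k:ℤ) (Int.natCast_nonneg k) (by exact_mod_cast hk.2.le)]
    ring
  have hsq : (∑ k ∈ Finset.range K, ((Q ((k:ℤ)+1) - Q k)/Δx) * ((Q ((k:ℤ)+1) - Q k)/Δx) * Δx)
      = ∑ k ∈ Finset.range K, ((Q ((k:ℤ)+1) - Q k)/Δx)^2 * Δx := by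
    refine Finset.sum_congr rfl fun k _ => ?_; ring
  -- key identity
  have key : Jd K Δx γ F (U (n + 1)) - Jd K Δx γ F (U n)
      = Δt * (-γ * (d 0)^2 - γ * (d (K:ℤ))^2
          - ∑ k ∈ Finset.range K, ((Q ((k:ℤ)+1) - Q k)/Δx)^2 * Δx) := by
    linear_combination hA + (γ*Δt)*hB + (γ*Δt*d (K:ℤ))*hbK + (γ*Δt*d 0)*hb0
      + (Δt*Δx)*hIdQ - (Δt*Δx*d 0/2)*hq0 - (Δt*Δx*d (K:ℤ)/2)*hqK
      + (Δt*Δx)*hIQ2 + (Δt*Δx*Q 0/2)*hp0 + (Δt*Δx*Q (K:ℤ)/2)*hpK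
      + Δt*hC - Δt*hsq + (Δt*Q (K:ℤ))*hnK - (Δt*Q 0)*hn0
  constructor
  · rw [key, mul_div_cancel_left₀ _ hΔt.ne']
    simp only [hd, hQ, sq_abs]
  · rw [key, mul_div_cancel_left₀ _ hΔt.ne']
    have h1 : 0 ≤ ∑ k ∈ Finset.range K, ((Q ((k:ℤ)+1) - Q k)/Δx)^2 * Δx :=
      Finset.sum_nonneg fun k _ => mul_nonneg (sq_nonneg _) hΔx.le
    have h2 := mul_nonneg hγ.le (sq_nonneg (d 0))
    have h3 := mul_nonneg hγ.le (sq_nonneg (d (K:ℤ)))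
    linarith
end
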